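/- Let s_U > 0, s_V > 0, ζ ∈ ℝ, and set σ = √(s_U² + s_V²), λ = s_U/s_V, ξ = ζ/(λσ). Then ∫_ℝ ω · (1/σ)[Φ(ξ − λω/σ) φ((ω + ζ)/σ) + Φ(−ξ − λω/σ) φ((ω − ζ)/σ)] dω = −2 s_U φ(ζ/s_U) + ζ(1 − 2Φ(ζ/s_U)). In words: the mean of the composite error term ε = V − U minus the conditional mean of V, under the closed-form conditional density given the control functions, equals minus the mean of the folded normal distribution with location ζ and scale s_U². -/

import Mathlib

open MeasureTheory

/-- The standard normal density. -/
noncomputable def stdNormalPDF (x : ℝ) : ℝ :=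
  (Real.sqrt (2 * Real.pi))⁻¹ * Real.exp (-x ^ 2 / 2)

/-- The standard normal cumulative distribution function. -/
noncomputable def stdNormalCDF (x : ℝ) : ℝ :=
  ∫ t in Set.Iio x, stdNormalPDF t

open Real Filter Set

lemma pdf_nonneg (x : ℝ) : 0 ≤ stdNormalPDF x := by
  unfold stdNormalPDF
  positivity

lemma pdf_pos (x : ℝ) : 0 < stdNormalPDF x := by
  unfold stdNormalPDF
  positivity

lemma pdf_cont : Continuous stdNormalPDF := by
  unfold stdNormalPDF
  continuity

lemma pdf_eq (x : ℝ) : stdNormalPDF x = (Real.sqrt (2 * Real.pi))⁻¹ * Real.exp (-(1/2) * x ^ 2) := by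
  unfold stdNormalPDF; ring_nf

lemma pdf_integrable : Integrable stdNormalPDF := by
  simp only [funext pdf_eq]
  exact (integrable_exp_neg_mul_sq (by norm_num : (0:ℝ) < 1/2)).const_mul _

lemma pdf_le (x : ℝ) : stdNormalPDF x ≤ (Real.sqrt (2 * Real.pi))⁻¹ := by
  unfold stdNormalPDF
  have h1 : Real.exp (-x^2/2) ≤ 1 := by
    rw [Real.exp_le_one_iff]; nlinarith [sq_nonneg x]
  have h2 : (0:ℝ) < (Real.sqrt (2 * Real.pi))⁻¹ := by positivity
  nlinarith

lemma pdf_integral : ∫ x, stdNormalPDF x = 1 := by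
  simp only [funext pdf_eq]
  rw [MeasureTheory.integral_const_mul, integral_gaussian]
  rw [show Real.pi / (1/2) = 2 * Real.pi by ring]
  rw [inv_mul_cancel₀ (by positivity)]

lemma id_mul_pdf_integrable : Integrable (fun x => x * stdNormalPDF x) := by
  simp only [funext pdf_eq]
  have := (integrable_mul_exp_neg_mul_sq (by norm_num : (0:ℝ) < 1/2)).const_mul
    ((Real.sqrt (2 * Real.pi))⁻¹)
  exact this.congr (Eventually.of_forall fun x => by ring)

lemma cdf_nonneg (x : ℝ) : 0 ≤ stdNormalCDF x :=
  integral_nonneg fun t => pdf_nonneg t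

lemma cdf_le_one (x : ℝ) : stdNormalCDF x ≤ 1 := by
  rw [← pdf_integral]
  exact setIntegral_le_integral pdf_integrable (Eventually.of_forall fun t => pdf_nonneg t)

lemma cdf_eq_Iic (x : ℝ) : stdNormalCDF x = ∫ t in Set.Iic x, stdNormalPDF t :=
  setIntegral_congr_set Iio_ae_eq_Iic

lemma cdf_sub (x y : ℝ) : stdNormalCDF y - stdNormalCDF x = ∫ t in x..y, stdNormalPDF t := by
  rw [cdf_eq_Iic, cdf_eq_Iic]
  exact intervalIntegral.integral_Iic_sub_Iic pdf_integrable.integrableOn pdf_integrable.integrableOn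

lemma cdf_hasDerivAt (x : ℝ) : HasDerivAt stdNormalCDF (stdNormalPDF x) x := by
  have h : ∀ y, stdNormalCDF y = stdNormalCDF 0 + ∫ t in (0:ℝ)..y, stdNormalPDF t := by
    intro y; rw [← cdf_sub]; ring
  have : HasDerivAt (fun y => stdNormalCDF 0 + ∫ t in (0:ℝ)..y, stdNormalPDF t)
      (stdNormalPDF x) x := by
    apply HasDerivAt.const_add
    exact intervalIntegral.integral_hasDerivAt_right
      (pdf_integrable.intervalIntegrable)
      (pdf_cont.stronglyMeasurableAtFilter _ _)
      pdf_cont.continuousAt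
  exact this.congr_of_eventuallyEq (Eventually.of_forall h)

lemma cdf_cont : Continuous stdNormalCDF :=
  continuous_iff_continuousAt.2 fun x => (cdf_hasDerivAt x).continuousAt

-- set-integral substitution lemmas via indicators
lemma setIntegral_Iio_comp_sub (g : ℝ → ℝ) (a b : ℝ) :
    ∫ x in Set.Iio a, g (x - b) = ∫ x in Set.Iio (a - b), g x := by
  have h1 : ∫ x in Set.Iio a, g (x - b)
      = ∫ x, (Set.Iio (a - b)).indicator g (x - b) := by
    rw [← MeasureTheory.integral_indicator measurableSet_Iio]
    congr 1
    ext x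
    have : x - b < a - b ↔ x < a := sub_lt_sub_iff_right b
    by_cases hx : x < a <;>
      simp [Set.indicator_apply, hx, this]
  rw [h1, integral_sub_right_eq_self ((Set.Iio (a - b)).indicator g) b,
    MeasureTheory.integral_indicator measurableSet_Iio]

lemma setIntegral_Iio_comp_mul_left (g : ℝ → ℝ) (a c : ℝ) (hc : 0 < c) :
    ∫ x in Set.Iio a, g (c * x) = c⁻¹ * ∫ x in Set.Iio (c * a), g x := by
  have h1 : ∫ x in Set.Iio a, g (c * x)
      = ∫ x, (Set.Iio (c * a)).indicator g (c * x) := by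
    rw [← MeasureTheory.integral_indicator measurableSet_Iio]
    congr 1
    ext x
    have : c * x < c * a ↔ x < a := mul_lt_mul_iff_right₀ hc
    by_cases hx : x < a <;> simp [Set.indicator_apply, hx, this]
  rw [h1, MeasureTheory.Measure.integral_comp_mul_left ((Set.Iio (c * a)).indicator g) c,
    MeasureTheory.integral_indicator measurableSet_Iio, abs_of_pos (inv_pos.2 hc), smul_eq_mul]

lemma pdf_even (x : ℝ) : stdNormalPDF (-x) = stdNormalPDF x := by
  unfold stdNormalPDF; rw [neg_pow]; ring_nf

lemma cdf_neg (x : ℝ) : stdNormalCDF (-x) = 1 - stdNormalCDF x := by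
  have h1 : stdNormalCDF (-x) = ∫ t in Set.Ioi x, stdNormalPDF t := by
    unfold stdNormalCDF
    rw [setIntegral_congr_set Iio_ae_eq_Iic]
    rw [show (∫ t in Set.Iic (-x), stdNormalPDF t) = ∫ t in Set.Iic (-x), stdNormalPDF (-t) from
      setIntegral_congr_fun measurableSet_Iic fun t _ => (pdf_even t).symm]
    rw [integral_comp_neg_Iic, neg_neg]
  have h2 : stdNormalCDF x + ∫ t in Set.Ioi x, stdNormalPDF t = 1 := by
    rw [← pdf_integral]
    have hIci : ∫ t in Set.Ioi x, stdNormalPDF t = ∫ t in Set.Ici x, stdNormalPDF t :=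
      setIntegral_congr_set Ioi_ae_eq_Ici
    rw [hIci]
    have := MeasureTheory.integral_add_compl (measurableSet_Iio (a := x)) pdf_integrable
      (f := stdNormalPDF)
    rw [Set.compl_Iio] at this
    exact this
  linarith [h1, h2]

lemma aux_neg_sq_atTop : Tendsto (fun x : ℝ => -x^2/2) atTop atBot := by
  have h2 : Tendsto (fun x : ℝ => x^2) atTop atTop :=
    tendsto_pow_atTop (two_ne_zero)
  have h3 := (tendsto_neg_atTop_atBot.comp h2).atBot_div_const (by norm_num : (0:ℝ) < 2)
  exact h3.congr fun x => by simp only [Function.comp_apply]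

lemma aux_neg_sq_atBot : Tendsto (fun x : ℝ => -x^2/2) atBot atBot := by
  have := aux_neg_sq_atTop.comp tendsto_neg_atBot_atTop
  exact this.congr fun x => by
    simp only [Function.comp_apply, even_two.neg_pow]

lemma pdf_tendsto_atTop : Tendsto stdNormalPDF atTop (nhds 0) := by
  unfold stdNormalPDF
  have h4 := (Real.tendsto_exp_atBot.comp aux_neg_sq_atTop).const_mul
    ((Real.sqrt (2 * Real.pi))⁻¹)
  rw [mul_zero] at h4
  exact h4.congr fun x => rfl

lemma pdf_tendsto_atBot : Tendsto stdNormalPDF atBot (nhds 0) := by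
  unfold stdNormalPDF
  have h4 := (Real.tendsto_exp_atBot.comp aux_neg_sq_atBot).const_mul
    ((Real.sqrt (2 * Real.pi))⁻¹)
  rw [mul_zero] at h4
  exact h4.congr fun x => rfl

lemma pdf_hasDerivAt (x : ℝ) : HasDerivAt stdNormalPDF (-(x * stdNormalPDF x)) x := by
  have h1 : HasDerivAt (fun y : ℝ => -y^2/2) (-x) x := by
    have h := ((hasDerivAt_pow 2 x).neg).div_const 2
    refine h.congr_deriv ?_
    norm_num
    ring
  have h2 := (h1.exp).const_mul ((Real.sqrt (2 * Real.pi))⁻¹)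
  have h3 : stdNormalPDF = fun y => (Real.sqrt (2*Real.pi))⁻¹ * Real.exp (-y^2/2) := rfl
  rw [h3]
  refine h2.congr_deriv ?_
  beta_reduce
  ring

lemma prod_pdf (a lam : ℝ) :
    ∫ t, stdNormalPDF (a - lam * t) * stdNormalPDF t
      = (Real.sqrt (1 + lam^2))⁻¹ * stdNormalPDF (a / Real.sqrt (1 + lam^2)) := by
  set k := 1 + lam^2 with hk
  have hk0 : 0 < k := by positivity
  have hsk : Real.sqrt k ^ 2 = k := Real.sq_sqrt hk0.le
  have hsk0 : 0 < Real.sqrt k := Real.sqrt_pos.2 hk0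
  set m := a * lam / k with hm
  have key : ∀ t, stdNormalPDF (a - lam * t) * stdNormalPDF t
      = ((Real.sqrt (2 * Real.pi))⁻¹ * ((Real.sqrt (2 * Real.pi))⁻¹
          * Real.exp (-(a/Real.sqrt k)^2/2))) * Real.exp (-(k/2) * (t - m)^2) := by
    intro t
    have harg : -(a - lam*t)^2/2 + -t^2/2 = -(a/Real.sqrt k)^2/2 + (-(k/2) * (t - m)^2) := by
      have h1 : (a/Real.sqrt k)^2 = a^2/k := by rw [div_pow, hsk]
      rw [h1, hm]
      field_simp
      ring
    unfold stdNormalPDF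
    rw [show ∀ (c e1 e2 : ℝ), (c * e1) * (c * e2) = c * c * (e1 * e2) from fun _ _ _ => by ring]
    rw [← Real.exp_add, harg, Real.exp_add]
    ring
  rw [funext key, MeasureTheory.integral_const_mul]
  rw [show (fun t => Real.exp (-(k/2) * (t - m)^2)) = fun t =>
    (fun s => Real.exp (-(k/2) * s^2)) (t - m) from rfl]
  rw [integral_sub_right_eq_self (fun s => Real.exp (-(k/2) * s^2)) m]
  rw [integral_gaussian (k/2)]
  have hπ : Real.sqrt (Real.pi / (k/2)) = Real.sqrt (2 * Real.pi) / Real.sqrt k := by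
    rw [show Real.pi/(k/2) = (2*Real.pi)/k from by field_simp, Real.sqrt_div (by positivity)]
  rw [hπ, pdf_eq, show -(1/2) * (a / Real.sqrt k)^2 = -(a/Real.sqrt k)^2/2 from by ring]
  have h2π : (0:ℝ) < Real.sqrt (2 * Real.pi) := by positivity
  field_simp

lemma cdf_shift (a lam t : ℝ) :
    stdNormalCDF (a - lam * t) = ∫ u in Set.Iio a, stdNormalPDF (u - lam * t) := by
  rw [setIntegral_Iio_comp_sub stdNormalPDF a (lam * t)]
  rfl

set_option maxHeartbeats 1000000 in
lemma cdf_mul_pdf_integral (a lam : ℝ) :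
    ∫ t, stdNormalCDF (a - lam * t) * stdNormalPDF t
      = stdNormalCDF (a / Real.sqrt (1 + lam^2)) := by
  set c := Real.sqrt (1 + lam^2) with hc
  have hc0 : 0 < c := Real.sqrt_pos.2 (by positivity)
  -- the function on the product
  set F : ℝ → ℝ → ℝ := fun t u => stdNormalPDF (u - lam * t) * stdNormalPDF t with hF
  have hFcont : Continuous (Function.uncurry F) := by
    apply Continuous.mul
    · exact pdf_cont.comp ((continuous_snd).sub (continuous_const.mul continuous_fst))
    · exact pdf_cont.comp continuous_fst
  have hInt : Integrable (Function.uncurry F) (volume.prod (volume.restrict (Set.Iio a))) := by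
    refine (MeasureTheory.integrable_prod_iff hFcont.aestronglyMeasurable).2 ⟨?_, ?_⟩
    · refine Eventually.of_forall fun t => ?_
      show Integrable (fun u => stdNormalPDF (u - lam * t) * stdNormalPDF t)
        (volume.restrict (Set.Iio a))
      exact ((pdf_integrable.comp_sub_right (lam * t)).mul_const _).restrict
    · show Integrable (fun t => ∫ u in Set.Iio a, ‖F t u‖) volume
      have hEq : ∀ t : ℝ, (∫ u in Set.Iio a, ‖F t u‖)
          = stdNormalCDF (a - lam * t) * stdNormalPDF t := by
        intro t
        rw [cdf_shift]
        rw [← MeasureTheory.integral_mul_const]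
        refine setIntegral_congr_fun measurableSet_Iio fun u _ => ?_
        rw [Real.norm_eq_abs, abs_of_nonneg (mul_nonneg (pdf_nonneg _) (pdf_nonneg _))]
      refine (integrable_congr (Eventually.of_forall fun t => hEq t)).2 ?_
      apply pdf_integrable.mono'
        ((cdf_cont.comp (by continuity)).mul pdf_cont).aestronglyMeasurable
      refine Eventually.of_forall fun t => ?_
      simp only [Function.comp_apply, Pi.mul_apply, Real.norm_eq_abs]
      rw [abs_of_nonneg (mul_nonneg (cdf_nonneg _) (pdf_nonneg _))]
      calc stdNormalCDF (a - lam * t) * stdNormalPDF t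
          ≤ 1 * stdNormalPDF t := by
            exact mul_le_mul_of_nonneg_right (cdf_le_one _) (pdf_nonneg _)
        _ = stdNormalPDF t := one_mul _
  -- rewrite LHS and swap
  have hLHS : ∫ t, stdNormalCDF (a - lam * t) * stdNormalPDF t
      = ∫ t, ∫ u in Set.Iio a, F t u := by
    refine integral_congr_ae (Eventually.of_forall fun t => ?_)
    show stdNormalCDF (a - lam * t) * stdNormalPDF t = ∫ u in Set.Iio a, F t u
    rw [cdf_shift, ← MeasureTheory.integral_mul_const]
  rw [hLHS, MeasureTheory.integral_integral_swap hInt]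
  have hInner : ∀ u : ℝ, (∫ t, F t u) = c⁻¹ * stdNormalPDF (u / c) := by
    intro u
    have := prod_pdf u lam
    rw [← hc] at this
    exact this
  rw [show (∫ u in Set.Iio a, ∫ t, F t u) = ∫ u in Set.Iio a, c⁻¹ * stdNormalPDF (u / c) from
    setIntegral_congr_fun measurableSet_Iio fun u _ => hInner u]
  rw [MeasureTheory.integral_const_mul]
  have h2 := setIntegral_Iio_comp_mul_left stdNormalPDF a c⁻¹ (inv_pos.2 hc0)
  simp only [div_eq_inv_mul] at *
  rw [h2, inv_inv]
  rw [show stdNormalCDF (c⁻¹ * a) = ∫ x in Set.Iio (c⁻¹ * a), stdNormalPDF x from rfl]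
  field_simp

lemma pdf_prod_integrable (a lam : ℝ) :
    Integrable (fun t => stdNormalPDF (a - lam * t) * stdNormalPDF t) := by
  apply pdf_integrable.const_mul ((Real.sqrt (2 * Real.pi))⁻¹) |>.mono'
  · exact ((pdf_cont.comp (by continuity)).mul pdf_cont).aestronglyMeasurable
  · refine Eventually.of_forall fun t => ?_
    rw [Real.norm_eq_abs, abs_of_nonneg (mul_nonneg (pdf_nonneg _) (pdf_nonneg _))]
    exact mul_le_mul_of_nonneg_right (pdf_le _) (pdf_nonneg _)

lemma cdf_mul_id_pdf_integrable (a lam : ℝ) :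
    Integrable (fun t => stdNormalCDF (a - lam * t) * (t * stdNormalPDF t)) := by
  apply id_mul_pdf_integrable.abs.mono'
  · exact ((cdf_cont.comp (by continuity)).mul
      (continuous_id.mul pdf_cont)).aestronglyMeasurable
  · refine Eventually.of_forall fun t => ?_
    rw [Real.norm_eq_abs, abs_mul]
    rw [abs_of_nonneg (cdf_nonneg _)]
    calc stdNormalCDF (a - lam * t) * |t * stdNormalPDF t|
        ≤ 1 * |t * stdNormalPDF t| :=
          mul_le_mul_of_nonneg_right (cdf_le_one _) (abs_nonneg _)
      _ = |t * stdNormalPDF t| := one_mul _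

lemma moment_cdf_pdf (a lam : ℝ) :
    ∫ t, stdNormalCDF (a - lam * t) * (t * stdNormalPDF t)
      = -lam * ((Real.sqrt (1 + lam^2))⁻¹ * stdNormalPDF (a / Real.sqrt (1 + lam^2))) := by
  have hu : ∀ x : ℝ, HasDerivAt (fun t => stdNormalCDF (a - lam * t))
      (-lam * stdNormalPDF (a - lam * x)) x := by
    intro x
    have hlin : HasDerivAt (fun t : ℝ => a - lam * t) (-lam) x := by
      simpa using ((hasDerivAt_id x).const_mul lam).const_sub a
    have := (cdf_hasDerivAt (a - lam * x)).comp x hlin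
    simpa [mul_comm, Function.comp_def] using this
  have hv : ∀ x : ℝ, HasDerivAt (fun t => -stdNormalPDF t) (x * stdNormalPDF x) x := by
    intro x
    exact (pdf_hasDerivAt x).neg.congr_deriv (neg_neg _)
  have huv' : Integrable ((fun t => stdNormalCDF (a - lam * t)) *
      (fun t => t * stdNormalPDF t)) := cdf_mul_id_pdf_integrable a lam
  have hu'v : Integrable ((fun t => -lam * stdNormalPDF (a - lam * t)) *
      (fun t => -stdNormalPDF t)) := by
    have := (pdf_prod_integrable a lam).const_mul lam
    exact this.congr (Eventually.of_forall fun t => by simp [Pi.mul_apply]; ring)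
  have h_lim : ∀ (l : Filter ℝ), Tendsto stdNormalPDF l (nhds 0) →
      Tendsto ((fun t => stdNormalCDF (a - lam * t)) * (fun t => -stdNormalPDF t)) l (nhds 0) := by
    intro l hl
    have hb : ∀ t : ℝ, ‖stdNormalCDF (a - lam * t) * -stdNormalPDF t‖ ≤ ‖stdNormalPDF t‖ := by
      intro t
      rw [norm_mul, Real.norm_eq_abs, Real.norm_eq_abs, abs_neg,
        abs_of_nonneg (cdf_nonneg _), abs_of_nonneg (pdf_nonneg _)]
      rw [Real.norm_eq_abs, abs_of_nonneg (pdf_nonneg _)]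
      exact mul_le_of_le_one_left (pdf_nonneg _) (cdf_le_one _)
    have h0 : Tendsto (fun t => ‖stdNormalPDF t‖) l (nhds 0) := by
      have := hl.norm
      simpa using this
    exact squeeze_zero_norm hb (by simpa using hl.norm)
  have key := MeasureTheory.integral_mul_deriv_eq_deriv_mul (fun x _ => hu x) (fun x _ => hv x) huv' hu'v
    (h_lim atBot pdf_tendsto_atBot) (h_lim atTop pdf_tendsto_atTop)
  rw [key]
  have h2 : ∫ x, (-lam * stdNormalPDF (a - lam * x)) * (-stdNormalPDF x)
      = lam * ((Real.sqrt (1 + lam^2))⁻¹ * stdNormalPDF (a / Real.sqrt (1 + lam^2))) := by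
    rw [← prod_pdf a lam, ← MeasureTheory.integral_const_mul]
    exact integral_congr_ae (Eventually.of_forall fun x => by ring)
  rw [h2]
  ring

lemma cdf_mul_pdf_integrable (a lam : ℝ) :
    Integrable (fun t => stdNormalCDF (a - lam * t) * stdNormalPDF t) := by
  apply pdf_integrable.mono'
  · exact ((cdf_cont.comp (by continuity)).mul pdf_cont).aestronglyMeasurable
  · refine Eventually.of_forall fun t => ?_
    rw [Real.norm_eq_abs, abs_of_nonneg (mul_nonneg (cdf_nonneg _) (pdf_nonneg _))]
    exact mul_le_of_le_one_left (pdf_nonneg _) (cdf_le_one _)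

lemma pdf_comp_affine_integrable (σ c : ℝ) (hσ : 0 < σ) :
    Integrable (fun x => stdNormalPDF ((x + c) / σ)) := by
  have h1 : Integrable (fun x => stdNormalPDF (σ⁻¹ * x)) :=
    pdf_integrable.comp_mul_left' (inv_ne_zero hσ.ne')
  have h2 := h1.comp_add_right c
  exact h2.congr (Eventually.of_forall fun x => by simp only [div_eq_inv_mul])

lemma id_mul_pdf_comp_affine_integrable (σ c : ℝ) (hσ : 0 < σ) :
    Integrable (fun x => x * stdNormalPDF ((x + c) / σ)) := by
  have h1 : Integrable (fun x => (σ⁻¹ * x) * stdNormalPDF (σ⁻¹ * x)) :=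
    id_mul_pdf_integrable.comp_mul_left' (inv_ne_zero hσ.ne')
  have h2 := (h1.const_mul σ).comp_add_right c
  have h3 : Integrable (fun x => (x + c) * stdNormalPDF ((x + c) / σ)) := by
    refine h2.congr (Eventually.of_forall fun x => ?_)
    simp only [div_eq_inv_mul]
    field_simp
  have h4 := (pdf_comp_affine_integrable σ c hσ).const_mul c
  exact (h3.sub h4).congr (Eventually.of_forall fun x => by simp only [Pi.sub_apply]; ring)

lemma term_integrable (σ c lam ξ : ℝ) (hσ : 0 < σ) :
    Integrable (fun ω => ω * ((1 / σ) *
      (stdNormalCDF (ξ - lam * ω / σ) * stdNormalPDF ((ω + c) / σ)))) := by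
  have hg : Integrable (fun ω => (1/σ) * |ω * stdNormalPDF ((ω + c) / σ)|) :=
    ((id_mul_pdf_comp_affine_integrable σ c hσ).abs.const_mul _)
  apply hg.mono'
  · apply Continuous.aestronglyMeasurable
    exact continuous_id.mul (continuous_const.mul
      ((cdf_cont.comp (by continuity)).mul (pdf_cont.comp (by continuity))))
  · refine Eventually.of_forall fun ω => ?_
    have h0 : (0:ℝ) < 1/σ := by positivity
    rw [Real.norm_eq_abs, abs_mul, abs_mul, abs_of_pos h0,
      abs_of_nonneg (mul_nonneg (cdf_nonneg _) (pdf_nonneg _))]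
    have hb : stdNormalCDF (ξ - lam * ω / σ) * stdNormalPDF ((ω + c) / σ)
        ≤ stdNormalPDF ((ω + c) / σ) :=
      mul_le_of_le_one_left (pdf_nonneg _) (cdf_le_one _)
    calc |ω| * (1/σ * (stdNormalCDF (ξ - lam * ω / σ) * stdNormalPDF ((ω + c) / σ)))
        ≤ |ω| * (1/σ * stdNormalPDF ((ω + c) / σ)) := by
          apply mul_le_mul_of_nonneg_left _ (abs_nonneg _)
          exact mul_le_mul_of_nonneg_left hb h0.le
      _ = 1/σ * (|ω| * stdNormalPDF ((ω + c) / σ)) := by ring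
      _ ≤ 1/σ * |ω * stdNormalPDF ((ω + c) / σ)| := by
          rw [abs_mul, abs_of_nonneg (pdf_nonneg _)]

lemma half_term (s r lam a : ℝ) :
    ∫ t, (s * t + r) * (stdNormalCDF (a - lam * t) * stdNormalPDF t)
      = s * (-lam * ((Real.sqrt (1 + lam^2))⁻¹ * stdNormalPDF (a / Real.sqrt (1 + lam^2))))
        + r * stdNormalCDF (a / Real.sqrt (1 + lam^2)) := by
  have h1 : Integrable (fun t => s * (stdNormalCDF (a - lam * t) * (t * stdNormalPDF t))) :=
    (cdf_mul_id_pdf_integrable a lam).const_mul s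
  have h2 : Integrable (fun t => r * (stdNormalCDF (a - lam * t) * stdNormalPDF t)) :=
    (cdf_mul_pdf_integrable a lam).const_mul r
  have heq : ∀ t, (s * t + r) * (stdNormalCDF (a - lam * t) * stdNormalPDF t)
      = s * (stdNormalCDF (a - lam * t) * (t * stdNormalPDF t))
        + r * (stdNormalCDF (a - lam * t) * stdNormalPDF t) := fun t => by ring
  rw [integral_congr_ae (Eventually.of_forall heq), integral_add h1 h2,
    MeasureTheory.integral_const_mul, MeasureTheory.integral_const_mul,
    moment_cdf_pdf, cdf_mul_pdf_integral]

lemma subst_affine (f : ℝ → ℝ) (σ b : ℝ) (hσ : 0 < σ) :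
    ∫ x, f x = σ * ∫ t, f (σ * t + b) := by
  have h1 : ∫ x, f x = ∫ x, f (x + b) := (integral_add_right_eq_self f b).symm
  have h2 : ∫ t, f (σ * t + b) = |σ⁻¹| • ∫ x, f (x + b) :=
    MeasureTheory.Measure.integral_comp_mul_left (fun x => f (x + b)) σ
  rw [abs_of_pos (inv_pos.2 hσ), smul_eq_mul] at h2
  rw [h1, h2]
  field_simp

/-- the mean of the centered composite error term under its closed-form
conditional density equals minus the mean of the folded normal distribution with location
`ζ` and scale `s_U²`. -/
theorem mean_composite_error
    (sU sV ζ : ℝ) (hU : 0 < sU) (hV : 0 < sV)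
    (σ : ℝ) (hσ : σ = Real.sqrt (sU ^ 2 + sV ^ 2))
    (lam : ℝ) (hlam : lam = sU / sV)
    (ξ : ℝ) (hξ : ξ = ζ / (lam * σ)) :
    (∫ ω : ℝ,
        ω * ((1 / σ) *
          (stdNormalCDF (ξ - lam * ω / σ) * stdNormalPDF ((ω + ζ) / σ) +
            stdNormalCDF (-ξ - lam * ω / σ) * stdNormalPDF ((ω - ζ) / σ)))) =
      -2 * sU * stdNormalPDF (ζ / sU) + ζ * (1 - 2 * stdNormalCDF (ζ / sU)) := by
  have hσ0 : 0 < σ := hσ ▸ Real.sqrt_pos.2 (by positivity)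
  have hσ2 : σ ^ 2 = sU ^ 2 + sV ^ 2 := by rw [hσ]; exact Real.sq_sqrt (by positivity)
  have hlam0 : 0 < lam := hlam ▸ div_pos hU hV
  set ca := Real.sqrt (1 + lam ^ 2) with hca_def
  have hca : ca = σ / sV := by
    rw [hca_def, show 1 + lam ^ 2 = (σ / sV) ^ 2 by
      rw [hlam, div_pow, div_pow]; field_simp; linarith [hσ2]]
    exact Real.sqrt_sq (div_pos hσ0 hV).le
  have hca0 : 0 < ca := by rw [hca]; exact div_pos hσ0 hV
  set f₁ : ℝ → ℝ := fun ω => ω * ((1 / σ) *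
      (stdNormalCDF (ξ - lam * ω / σ) * stdNormalPDF ((ω + ζ) / σ))) with hf₁
  set f₂ : ℝ → ℝ := fun ω => ω * ((1 / σ) *
      (stdNormalCDF (-ξ - lam * ω / σ) * stdNormalPDF ((ω - ζ) / σ))) with hf₂
  have hint1 : Integrable f₁ := term_integrable σ ζ lam ξ hσ0
  have hint2 : Integrable f₂ := by
    refine (term_integrable σ (-ζ) lam (-ξ) hσ0).congr (Eventually.of_forall fun ω => ?_)
    rw [hf₂]
    simp only [← sub_eq_add_neg]
  have hsplit : (∫ ω : ℝ,
        ω * ((1 / σ) *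
          (stdNormalCDF (ξ - lam * ω / σ) * stdNormalPDF ((ω + ζ) / σ) +
            stdNormalCDF (-ξ - lam * ω / σ) * stdNormalPDF ((ω - ζ) / σ))))
      = (∫ ω, f₁ ω) + ∫ ω, f₂ ω := by
    rw [← integral_add hint1 hint2]
    exact integral_congr_ae (Eventually.of_forall fun ω => by rw [hf₁, hf₂]; ring)
  set a₁ := ξ + lam * ζ / σ with ha₁_def
  have ha₁ca : a₁ / ca = ζ / sU := by
    rw [ha₁_def, hξ, hlam, hca]
    field_simp
    linear_combination (-ζ) * hσ2
  have hI1 : (∫ ω, f₁ ω) = σ * (-lam * (ca⁻¹ * stdNormalPDF (a₁ / ca)))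
      + (-ζ) * stdNormalCDF (a₁ / ca) := by
    rw [subst_affine f₁ σ (-ζ) hσ0, ← MeasureTheory.integral_const_mul]
    rw [show (fun t => σ * f₁ (σ * t + -ζ)) = fun t =>
        (σ * t + -ζ) * (stdNormalCDF (a₁ - lam * t) * stdNormalPDF t) from funext fun t => by
      rw [hf₁]
      beta_reduce
      have e1 : ξ - lam * (σ * t + -ζ) / σ = a₁ - lam * t := by
        rw [ha₁_def]; field_simp; ring
      have e2 : (σ * t + -ζ + ζ) / σ = t := by field_simp; ring
      rw [e1, e2]
      field_simp]
    exact half_term σ (-ζ) lam a₁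
  have hI2 : (∫ ω, f₂ ω) = σ * (-lam * (ca⁻¹ * stdNormalPDF (-(a₁ / ca))))
      + ζ * stdNormalCDF (-(a₁ / ca)) := by
    rw [subst_affine f₂ σ ζ hσ0, ← MeasureTheory.integral_const_mul]
    rw [show (fun t => σ * f₂ (σ * t + ζ)) = fun t =>
        (σ * t + ζ) * (stdNormalCDF (-a₁ - lam * t) * stdNormalPDF t) from funext fun t => by
      rw [hf₂]
      beta_reduce
      have e1 : -ξ - lam * (σ * t + ζ) / σ = -a₁ - lam * t := by
        rw [ha₁_def]; field_simp; ring
      have e2 : (σ * t + ζ - ζ) / σ = t := by field_simp; ring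
      rw [e1, e2]
      field_simp]
    rw [half_term σ ζ lam (-a₁), neg_div]
  have hslc : σ * lam * ca⁻¹ = sU := by
    rw [hlam, hca]
    field_simp
  rw [hsplit, hI1, hI2, ha₁ca, pdf_even, cdf_neg]
  have expand : σ * (-lam * (ca⁻¹ * stdNormalPDF (ζ / sU)))
      = -(σ * lam * ca⁻¹) * stdNormalPDF (ζ / sU) := by ring
  rw [expand, hslc]
  ring
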